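/- Let W : 𝕋² × [0,L] → ℝ³ be a C² vector field on Ω = 𝕋² × [0,L] satisfying ∇×W = 0 and ∇·W = 0 in Ω, with W₃ = 0 on both boundary components 𝕋²×{0} and 𝕋²×{L}, and with zero fluxes ∫_{x=0} W·dS = 0 and ∫_{y=0} W·dS = 0. Then W ≡ 0 in Ω. -/

import Mathlib

open Real MeasureTheory

/-- Partial derivative in the `i`-th coordinate direction on `ℝ³ = Fin 3 → ℝ`. -/
noncomputable def pd3 (i : Fin 3) (f : (Fin 3 → ℝ) → ℝ) (x : Fin 3 → ℝ) : ℝ :=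
  fderiv ℝ f x (Pi.single i 1)

namespace SlabAux

lemma update_eq_affine (x : Fin 3 → ℝ) (i : Fin 3) (t : ℝ) :
    Function.update x i t = x + (t - x i) • (Pi.single i 1 : Fin 3 → ℝ) := by
  funext j
  rcases eq_or_ne j i with h | h
  · subst h; simp
  · simp [Function.update_apply, h, Pi.single_apply, h]

lemma hasDerivAt_line {f : (Fin 3 → ℝ) → ℝ} {x : Fin 3 → ℝ} {i : Fin 3} {t : ℝ}
    (hf : DifferentiableAt ℝ f (Function.update x i t)) :
    HasDerivAt (fun s => f (Function.update x i s)) (pd3 i f (Function.update x i t)) t := by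
  have hγ : HasDerivAt (fun s : ℝ => Function.update x i s) (Pi.single i 1) t := by
    have h1 : HasDerivAt (fun s : ℝ => x + (s - x i) • (Pi.single i 1 : Fin 3 → ℝ))
        ((1:ℝ) • (Pi.single i 1 : Fin 3 → ℝ)) t :=
      (((hasDerivAt_id t).sub_const (x i)).smul_const (Pi.single i 1 : Fin 3 → ℝ)).const_add x
    have h2 : (fun s : ℝ => Function.update x i s)
        = fun s : ℝ => x + (s - x i) • (Pi.single i 1 : Fin 3 → ℝ) := by
      funext s; exact update_eq_affine x i s
    rw [h2]; simpa using h1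
  exact hf.hasFDerivAt.comp_hasDerivAt t hγ

lemma pd3_eq_zero_of_const_on_line {f : (Fin 3 → ℝ) → ℝ} {p : Fin 3 → ℝ} {i : Fin 3}
    (hf : DifferentiableAt ℝ f p)
    (hconst : ∀ s, f (Function.update p i s) = f p) : pd3 i f p = 0 := by
  have hup : Function.update p i (p i) = p := Function.update_eq_self i p
  have h1 : HasDerivAt (fun s => f (Function.update p i s)) (pd3 i f p) (p i) := by
    have := hasDerivAt_line (f := f) (x := p) (i := i) (t := p i) (by rwa [hup])
    rwa [hup] at this
  have h2 : HasDerivAt (fun s => f (Function.update p i s)) 0 (p i) := by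
    have : (fun s => f (Function.update p i s)) = fun _ => f p := funext hconst
    rw [this]; exact hasDerivAt_const _ _
  exact h1.unique h2

lemma per_int {β : Type*} {f : (Fin 3 → ℝ) → β} {i : Fin 3} {c : ℝ}
    (h : ∀ x, f (x + (Pi.single i c : Fin 3 → ℝ)) = f x) :
    ∀ (n : ℤ) (x : Fin 3 → ℝ), f (x + (Pi.single i ((n : ℝ) * c) : Fin 3 → ℝ)) = f x := by
  have hstep : ∀ (m : ℤ) (x : Fin 3 → ℝ),
      f (x + (Pi.single i (((m : ℝ) + 1) * c) : Fin 3 → ℝ)) = f (x + (Pi.single i ((m : ℝ) * c) : Fin 3 → ℝ)) := by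
    intro m x
    have : (Pi.single i (((m : ℝ) + 1) * c) : Fin 3 → ℝ) = Pi.single i ((m:ℝ) * c) + Pi.single i c := by
      rw [← Pi.single_add]; ring_nf
    rw [this, ← add_assoc]
    exact h (x + Pi.single i ((m:ℝ) * c))
  intro n
  induction n using Int.induction_on with
  | zero => intro x; simpa using congrArg f (by simp : x + (Pi.single i ((0:ℝ) * c) : Fin 3 → ℝ) = x)
  | succ m ih =>
      intro x
      have h1 := hstep m x
      push_cast at h1 ih ⊢
      rw [h1]; exact ih x
  | pred m ih =>
      intro x
      have h1 := hstep (-m - 1) x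
      push_cast at h1 ih ⊢
      rw [show (-(m:ℝ) - 1 + 1) = -(m:ℝ) by ring] at h1
      rw [← h1]; exact ih x


lemma reduce {β : Sort*} {f : (Fin 3 → ℝ) → β}
    (hint0 : ∀ (n : ℤ) (x : Fin 3 → ℝ), f (x + (Pi.single 0 ((n : ℝ) * (2*π)) : Fin 3 → ℝ)) = f x)
    (hint1 : ∀ (n : ℤ) (x : Fin 3 → ℝ), f (x + (Pi.single 1 ((n : ℝ) * (2*π)) : Fin 3 → ℝ)) = f x)
    (x : Fin 3 → ℝ) :
    ∃ x', f x' = f x ∧ x' 2 = x 2 ∧ x' 0 ∈ Set.Icc 0 (2*π) ∧ x' 1 ∈ Set.Icc 0 (2*π) := by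
  have h2π : (0:ℝ) < 2*π := by positivity
  set n0 : ℤ := -⌊x 0 / (2*π)⌋ with hn0
  set n1 : ℤ := -⌊x 1 / (2*π)⌋ with hn1
  refine ⟨x + (Pi.single 0 ((n0:ℝ)*(2*π)) : Fin 3 → ℝ) + (Pi.single 1 ((n1:ℝ)*(2*π)) : Fin 3 → ℝ),
    ?_, ?_, ?_, ?_⟩
  · rw [hint1 n1 _, hint0 n0 x]
  · simp
  · have hfr0 := Int.fract_nonneg (x 0 / (2*π))
    have hfr1 := (Int.fract_lt_one (x 0 / (2*π))).le
    have hval : (x + (Pi.single 0 ((n0:ℝ)*(2*π)) : Fin 3 → ℝ)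
          + (Pi.single 1 ((n1:ℝ)*(2*π)) : Fin 3 → ℝ)) 0
        = 2*π * Int.fract (x 0 / (2*π)) := by
      have hc : (x + (Pi.single 0 ((n0:ℝ)*(2*π)) : Fin 3 → ℝ)
          + (Pi.single 1 ((n1:ℝ)*(2*π)) : Fin 3 → ℝ)) 0 = x 0 + (n0:ℝ)*(2*π) := by simp
      rw [hc, ← Int.self_sub_floor, hn0]
      push_cast
      field_simp
      ring
    rw [hval]
    constructor
    · positivity
    · nlinarith
  · have hfr0 := Int.fract_nonneg (x 1 / (2*π))
    have hfr1 := (Int.fract_lt_one (x 1 / (2*π))).le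
    have hval : (x + (Pi.single 0 ((n0:ℝ)*(2*π)) : Fin 3 → ℝ)
          + (Pi.single 1 ((n1:ℝ)*(2*π)) : Fin 3 → ℝ)) 1
        = 2*π * Int.fract (x 1 / (2*π)) := by
      have hc : (x + (Pi.single 0 ((n0:ℝ)*(2*π)) : Fin 3 → ℝ)
          + (Pi.single 1 ((n1:ℝ)*(2*π)) : Fin 3 → ℝ)) 1 = x 1 + (n1:ℝ)*(2*π) := by simp
      rw [hc, ← Int.self_sub_floor, hn1]
      push_cast
      field_simp
      ring
    rw [hval]
    constructor
    · positivity
    · nlinarith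

lemma secondDerivTest {g g' : ℝ → ℝ} {a c : ℝ}
    (hg : ∀ t, HasDerivAt g (g' t) t) (hg' : HasDerivAt g' c a)
    (hmax : IsLocalMax g a) : c ≤ 0 := by
  by_contra hc
  push_neg at hc
  have h0 : g' a = 0 := hmax.hasDerivAt_eq_zero (hg a)
  have hslope : Filter.Tendsto (slope g' a) (nhdsWithin a {a}ᶜ) (nhds c) :=
    hasDerivAt_iff_tendsto_slope.mp hg'
  have hev : ∀ᶠ t in nhdsWithin a {a}ᶜ, 0 < slope g' a t :=
    hslope.eventually (eventually_gt_nhds hc)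
  have hev' : ∀ᶠ t in nhdsWithin a (Set.Ioi a), 0 < g' t := by
    have h1 : ∀ᶠ t in nhdsWithin a (Set.Ioi a), 0 < slope g' a t :=
      hev.filter_mono (nhdsWithin_mono a (fun t ht => ne_of_gt ht))
    have h2 : ∀ᶠ t in nhdsWithin a (Set.Ioi a), a < t := eventually_mem_nhdsWithin
    filter_upwards [h1, h2] with t h1 h2
    rw [slope_def_field, h0, sub_zero, div_pos_iff] at h1
    rcases h1 with ⟨h, _⟩ | ⟨_, h⟩
    · exact h
    · linarith
  have hmax' : ∀ᶠ t in nhdsWithin a (Set.Ioi a), g t ≤ g a := hmax.filter_mono nhdsWithin_le_nhds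
  obtain ⟨u, hu, hsub⟩ := mem_nhdsGT_iff_exists_Ioo_subset.mp (hev'.and hmax')
  set b := (a + u)/2 with hb
  have hab : a < b := by rw [hb]; rw [Set.mem_Ioi] at hu; linarith
  have hbu : b < u := by rw [hb]; rw [Set.mem_Ioi] at hu; linarith
  have hmono : StrictMonoOn g (Set.Icc a b) := by
    apply strictMonoOn_of_deriv_pos (convex_Icc a b)
      (fun t _ => (hg t).continuousAt.continuousWithinAt)
    intro t ht
    rw [interior_Icc] at ht
    rw [(hg t).deriv]
    exact (hsub ⟨ht.1, lt_trans ht.2 hbu⟩).1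
  have h1 : g a < g b := hmono (Set.left_mem_Icc.mpr hab.le) (Set.right_mem_Icc.mpr hab.le) hab
  have h2 : g b ≤ g a := (hsub ⟨hab, hbu⟩).2
  linarith

lemma constOfDerivConstPeriodic {g : ℝ → ℝ} {c p : ℝ} (hp : 0 < p)
    (hg : ∀ t, HasDerivAt g c t) (hper : ∀ t, g (t + p) = g t) :
    c = 0 ∧ ∀ t, g t = g 0 := by
  have key : ∀ t, g t = g 0 + c * t := by
    intro t
    have hd : ∀ s, HasDerivAt (fun t => g t - c * t) 0 s := by
      intro s
      have := (hg s).sub ((hasDerivAt_id s).const_mul c)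
      exact this.congr_deriv (by simp)
    have hdiff : Differentiable ℝ (fun t => g t - c * t) := fun s => (hd s).differentiableAt
    have hzero : ∀ s, deriv (fun t => g t - c * t) s = 0 := fun s => (hd s).deriv
    have := is_const_of_deriv_eq_zero hdiff hzero t 0
    simp at this
    linarith
  have hc : c = 0 := by
    have h1 := key p
    have h2 := hper 0
    rw [zero_add] at h2
    rw [h2] at h1
    have : c * p = 0 := by linarith
    rcases mul_eq_zero.mp this with h | h
    · exact h
    · exact absurd h (ne_of_gt hp)
  refine ⟨hc, fun t => ?_⟩
  rw [key t, hc]; ring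

lemma hasDerivAt_of_CR {F : ℂ → ℂ} {z a : ℂ} {L : ℂ →L[ℝ] ℂ}
    (h : HasFDerivAt F L z) (h1 : L 1 = a) (hI : L Complex.I = Complex.I * a) :
    HasDerivAt F a z := by
  have hL : ∀ v : ℂ, L v = v * a := by
    intro v
    have hv : v = v.re • (1:ℂ) + v.im • Complex.I := by
      simp [Complex.real_smul, Complex.re_add_im]
    calc L v = L (v.re • (1:ℂ) + v.im • Complex.I) := by rw [← hv]
      _ = v.re • L 1 + v.im • L Complex.I := by rw [map_add, L.map_smul, L.map_smul]
      _ = v * a := by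
          rw [h1, hI]
          simp only [Complex.real_smul]
          rw [show (v.re : ℂ) * a + (v.im : ℂ) * (Complex.I * a) = ((v.re : ℂ) + (v.im:ℂ) * Complex.I) * a by ring]
          rw [Complex.re_add_im]
  have hM : HasFDerivAt F (ContinuousLinearMap.smulRight (1 : ℂ →L[ℂ] ℂ) a) z := by
    rw [hasFDerivAt_iff_isLittleO]
    have hlo := h.isLittleO
    simp only [hL] at hlo
    simpa only [ContinuousLinearMap.smulRight_apply, ContinuousLinearMap.one_apply,
      smul_eq_mul, mul_comm] using hlo
  simpa using hM.hasDerivAt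


lemma pd3_hasFDerivAt {f : (Fin 3 → ℝ) → ℝ} (hf : ContDiff ℝ 2 f) (j : Fin 3) (x : Fin 3 → ℝ) :
    HasFDerivAt (pd3 j f)
      ((ContinuousLinearMap.apply ℝ ℝ (Pi.single j 1 : Fin 3 → ℝ)).comp
        (fderiv ℝ (fderiv ℝ f) x)) x := by
  have hf' : ContDiff ℝ 1 (fderiv ℝ f) := hf.fderiv_right (by norm_num)
  exact (ContinuousLinearMap.apply ℝ ℝ (Pi.single j 1 : Fin 3 → ℝ)).hasFDerivAt.comp x
    ((hf'.differentiable (by norm_num) x).hasFDerivAt)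

lemma pd3_differentiable {f : (Fin 3 → ℝ) → ℝ} (hf : ContDiff ℝ 2 f) (j : Fin 3) :
    Differentiable ℝ (pd3 j f) :=
  fun x => (pd3_hasFDerivAt hf j x).differentiableAt

lemma pd3_pd3 {f : (Fin 3 → ℝ) → ℝ} (hf : ContDiff ℝ 2 f) (i j : Fin 3) (x : Fin 3 → ℝ) :
    pd3 i (pd3 j f) x
      = fderiv ℝ (fderiv ℝ f) x (Pi.single i 1) (Pi.single j 1) := by
  show fderiv ℝ (pd3 j f) x (Pi.single i 1) = _
  rw [(pd3_hasFDerivAt hf j x).fderiv]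
  rfl

lemma pdComm {f : (Fin 3 → ℝ) → ℝ} (hf : ContDiff ℝ 2 f) (i j : Fin 3) (x : Fin 3 → ℝ) :
    pd3 i (pd3 j f) x = pd3 j (pd3 i f) x := by
  have hdf : Differentiable ℝ f := hf.differentiable two_ne_zero
  have hf' : ContDiff ℝ 1 (fderiv ℝ f) := hf.fderiv_right (by norm_num)
  have hx : HasFDerivAt (fderiv ℝ f) (fderiv ℝ (fderiv ℝ f) x) x :=
    (hf'.differentiable (by norm_num) x).hasFDerivAt
  have key := second_derivative_symmetric (f := f) (f' := fderiv ℝ f)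
    (fun y => (hdf y).hasFDerivAt) hx (Pi.single i 1) (Pi.single j 1)
  rw [pd3_pd3 hf i j x, pd3_pd3 hf j i x, key]

lemma fderiv_translate {f : (Fin 3 → ℝ) → ℝ} (hf : Differentiable ℝ f) {c : Fin 3 → ℝ}
    (hper : ∀ x, f (x + c) = f x) (x : Fin 3 → ℝ) :
    fderiv ℝ f (x + c) = fderiv ℝ f x := by
  have htr : HasFDerivAt (fun y : Fin 3 → ℝ => y + c) (ContinuousLinearMap.id ℝ (Fin 3 → ℝ)) x := by
    simpa using (hasFDerivAt_id (𝕜 := ℝ) x).add_const c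
  have h1 : HasFDerivAt (fun y => f (y + c)) (fderiv ℝ f (x + c)) x := by
    have := (hf (x + c)).hasFDerivAt.comp x htr
    exact this
  have h2 : (fun y => f (y + c)) = f := funext hper
  rw [h2] at h1
  exact (h1.fderiv).symm

lemma pd3_translate {f : (Fin 3 → ℝ) → ℝ} (hf : Differentiable ℝ f) {c : Fin 3 → ℝ}
    (hper : ∀ x, f (x + c) = f x) (j : Fin 3) (x : Fin 3 → ℝ) :
    pd3 j f (x + c) = pd3 j f x := by
  show fderiv ℝ f (x + c) (Pi.single j 1) = fderiv ℝ f x (Pi.single j 1)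
  rw [fderiv_translate hf hper x]


lemma slab_max (L : ℝ) (hL : 0 < L) (V : (Fin 3 → ℝ) → ℝ) (hV : ContDiff ℝ 2 V)
    (hp0 : ∀ x, V (x + (Pi.single 0 (2*π) : Fin 3 → ℝ)) = V x)
    (hp1 : ∀ x, V (x + (Pi.single 1 (2*π) : Fin 3 → ℝ)) = V x)
    (hlap : ∀ x : Fin 3 → ℝ, x 2 ∈ Set.Ioo 0 L →
      pd3 0 (pd3 0 V) x + pd3 1 (pd3 1 V) x + pd3 2 (pd3 2 V) x = 0)
    (hb : ∀ x : Fin 3 → ℝ, x 2 = 0 ∨ x 2 = L → V x = 0) :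
    ∀ x : Fin 3 → ℝ, x 2 ∈ Set.Icc 0 L → V x ≤ 0 := by
  intro xb hxb
  rcases hxb with ⟨hxb0, hxbL⟩
  suffices hsuff : ∀ ε : ℝ, 0 < ε → V xb ≤ ε * L^2 by
    by_contra hpos
    push_neg at hpos
    have hε : 0 < V xb / (2 * L^2) := by positivity
    have := hsuff _ hε
    rw [div_mul_eq_mul_div] at this
    have hL2 : (0:ℝ) < L^2 := by positivity
    have hhal : V xb * L ^ 2 / (2 * L ^ 2) = V xb / 2 := by field_simp
    rw [hhal] at this
    linarith
  intro ε hε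
  set u : (Fin 3 → ℝ) → ℝ := fun y => V y + ε * (y 2 * y 2) with hu_def
  have hVd : Differentiable ℝ V := hV.differentiable two_ne_zero
  have hq2 : ContDiff ℝ 2 (fun y : Fin 3 → ℝ => ε * (y 2 * y 2)) := by
    exact contDiff_const.mul
      (((ContinuousLinearMap.proj (R := ℝ) (φ := fun _ : Fin 3 => ℝ) 2).contDiff).mul
       ((ContinuousLinearMap.proj (R := ℝ) (φ := fun _ : Fin 3 => ℝ) 2).contDiff))
  have hu2 : ContDiff ℝ 2 u := hV.add hq2
  have hud : Differentiable ℝ u := hu2.differentiable two_ne_zero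
  have hqf : ∀ y : Fin 3 → ℝ, HasFDerivAt (fun y : Fin 3 → ℝ => ε * (y 2 * y 2))
      ((ε * (2 * y 2)) • ContinuousLinearMap.proj (R := ℝ) (φ := fun _ : Fin 3 => ℝ) 2) y := by
    intro y
    have hp0 := (ContinuousLinearMap.proj (R := ℝ) (φ := fun _ : Fin 3 => ℝ) 2).hasFDerivAt (x := y)
    have hp : HasFDerivAt (fun y : Fin 3 → ℝ => y 2)
        (ContinuousLinearMap.proj (R := ℝ) (φ := fun _ : Fin 3 => ℝ) 2) y := hp0
    have h2 := (hp.mul hp).const_mul ε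
    refine h2.congr_fderiv ?_
    ext v
    simp
    ring
  have hpd_u : ∀ (i : Fin 3) (y : Fin 3 → ℝ),
      pd3 i u y = pd3 i V y + (ε * (2 * y 2)) * ((Pi.single i (1:ℝ) : Fin 3 → ℝ) 2) := by
    intro i y
    show fderiv ℝ u y (Pi.single i 1) = _
    rw [HasFDerivAt.fderiv (f := u) ((hVd y).hasFDerivAt.add (hqf y))]
    simp
    rfl
  have hfun_u0 : pd3 0 u = pd3 0 V := by
    funext y
    rw [hpd_u 0 y, Pi.single_eq_of_ne (by decide) 1]
    ring
  have hfun_u1 : pd3 1 u = pd3 1 V := by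
    funext y
    rw [hpd_u 1 y, Pi.single_eq_of_ne (by decide) 1]
    ring
  have hfun_u2 : pd3 2 u = fun y => pd3 2 V y + (2*ε) * y 2 := by
    funext y
    rw [hpd_u 2 y, Pi.single_eq_same]
    ring
  have hlin : ∀ y : Fin 3 → ℝ, HasFDerivAt (fun y : Fin 3 → ℝ => (2*ε) * y 2)
      ((2*ε) • ContinuousLinearMap.proj (R := ℝ) (φ := fun _ : Fin 3 => ℝ) 2) y := by
    intro y
    have hp0 := (ContinuousLinearMap.proj (R := ℝ) (φ := fun _ : Fin 3 => ℝ) 2).hasFDerivAt (x := y)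
    have hp : HasFDerivAt (fun y : Fin 3 → ℝ => y 2)
        (ContinuousLinearMap.proj (R := ℝ) (φ := fun _ : Fin 3 => ℝ) 2) y := hp0
    exact hp.const_mul (2*ε)
  have hlapu : ∀ y : Fin 3 → ℝ, y 2 ∈ Set.Ioo 0 L →
      pd3 0 (pd3 0 u) y + pd3 1 (pd3 1 u) y + pd3 2 (pd3 2 u) y = 2*ε := by
    intro y hy
    rw [hfun_u0, hfun_u1, hfun_u2]
    have h22 : pd3 2 (fun y => pd3 2 V y + (2*ε) * y 2) y = pd3 2 (pd3 2 V) y + 2*ε := by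
      show fderiv ℝ _ y (Pi.single 2 1) = _
      rw [HasFDerivAt.fderiv (f := fun y => pd3 2 V y + (2*ε) * y 2) ((pd3_differentiable hV 2 y).hasFDerivAt.add (hlin y))]
      simp [Pi.single_eq_same]
      rfl
    rw [h22]
    have := hlap y hy
    linarith
  -- compact box and maximum
  set b : Fin 3 → ℝ := ![2*π, 2*π, L] with hb_def
  have hKc : IsCompact (Set.Icc (0 : Fin 3 → ℝ) b) := isCompact_Icc
  have hKne : (Set.Icc (0 : Fin 3 → ℝ) b).Nonempty := by
    refine ⟨0, le_refl 0, ?_⟩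
    intro i
    fin_cases i <;> simp [hb_def] <;> positivity
  obtain ⟨x₀, hx₀K, hx₀max⟩ := hKc.exists_isMaxOn hKne (hud.continuous.continuousOn)
  -- global bound by u x₀
  have hint0 : ∀ (n : ℤ) (x : Fin 3 → ℝ), V (x + (Pi.single 0 ((n : ℝ) * (2*π)) : Fin 3 → ℝ)) = V x :=
    per_int hp0
  have hint1 : ∀ (n : ℤ) (x : Fin 3 → ℝ), V (x + (Pi.single 1 ((n : ℝ) * (2*π)) : Fin 3 → ℝ)) = V x :=
    per_int hp1
  have hsup : ∀ y : Fin 3 → ℝ, y 2 ∈ Set.Icc 0 L → u y ≤ u x₀ := by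
    intro y hy
    obtain ⟨x', hfx', hx'2, hx'0, hx'1⟩ := reduce hint0 hint1 y
    have hux' : u x' = u y := by rw [hu_def]; simp only [hfx', hx'2]
    have hx'K : x' ∈ Set.Icc (0 : Fin 3 → ℝ) b := by
      constructor
      · intro i
        fin_cases i
        · exact hx'0.1
        · exact hx'1.1
        · show (0:ℝ) ≤ x' 2
          rw [hx'2]; exact hy.1
      · intro i
        fin_cases i
        · exact hx'0.2
        · exact hx'1.2
        · show x' 2 ≤ b 2
          rw [hx'2]
          simpa [hb_def] using hy.2
    rw [← hux']
    exact hx₀max hx'K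
  have hx₀2 : x₀ 2 ∈ Set.Icc 0 L := by
    rcases hx₀K with ⟨h1, h2⟩
    refine ⟨h1 2, ?_⟩
    simpa [hb_def] using h2 2
  -- x₀ is on the boundary
  have hbd : x₀ 2 = 0 ∨ x₀ 2 = L := by
    by_contra hcon
    push_neg at hcon
    have hioo : x₀ 2 ∈ Set.Ioo 0 L :=
      ⟨lt_of_le_of_ne hx₀2.1 (Ne.symm hcon.1), lt_of_le_of_ne hx₀2.2 hcon.2⟩
    have hloc : IsLocalMax u x₀ := by
      have hUopen : IsOpen {y : Fin 3 → ℝ | y 2 ∈ Set.Ioo 0 L} :=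
        isOpen_Ioo.preimage (continuous_apply 2)
      have hU : {y : Fin 3 → ℝ | y 2 ∈ Set.Ioo 0 L} ∈ nhds x₀ := hUopen.mem_nhds hioo
      filter_upwards [hU] with y hy
      exact hsup y (Set.Ioo_subset_Icc_self hy)
    have hi : ∀ i : Fin 3, pd3 i (pd3 i u) x₀ ≤ 0 := by
      intro i
      have hupd : Function.update x₀ i (x₀ i) = x₀ := Function.update_eq_self i x₀
      have hgd : ∀ t, HasDerivAt (fun s => u (Function.update x₀ i s))
          (pd3 i u (Function.update x₀ i t)) t := fun t => hasDerivAt_line (hud _)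
      have hg'd : HasDerivAt (fun s => pd3 i u (Function.update x₀ i s))
          (pd3 i (pd3 i u) x₀) (x₀ i) := by
        have := hasDerivAt_line (f := pd3 i u) (x := x₀) (i := i) (t := x₀ i)
          ((pd3_differentiable hu2 i) _)
        rwa [hupd] at this
      have hγc : Continuous (fun t : ℝ => Function.update x₀ i t) := by
        have : (fun t : ℝ => Function.update x₀ i t)
            = fun t : ℝ => x₀ + (t - x₀ i) • (Pi.single i 1 : Fin 3 → ℝ) := by
          funext t; exact update_eq_affine x₀ i t
        rw [this]
        exact continuous_const.add ((continuous_id.sub continuous_const).smul continuous_const)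
      have htend : Filter.Tendsto (fun t : ℝ => Function.update x₀ i t) (nhds (x₀ i)) (nhds x₀) := by
        have := hγc.tendsto (x₀ i)
        rwa [hupd] at this
      have hlocg : IsLocalMax (fun s => u (Function.update x₀ i s)) (x₀ i) := by
        have hev := htend.eventually hloc
        filter_upwards [hev] with t ht
        show u (Function.update x₀ i t) ≤ u (Function.update x₀ i (x₀ i))
        rw [hupd]
        exact ht
      exact secondDerivTest hgd hg'd hlocg
    have hsum := hlapu x₀ hioo
    have := hi 0; have := hi 1; have := hi 2
    linarith
  -- conclude
  have hub : u x₀ ≤ ε * L^2 := by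
    have hV0 : V x₀ = 0 := hb x₀ hbd
    rw [hu_def]
    simp only [hV0, zero_add]
    rcases hbd with h | h <;> rw [h] <;> nlinarith
  have h1 := hsup xb ⟨hxb0, hxbL⟩
  have h2 : 0 ≤ ε * (xb 2 * xb 2) := by nlinarith
  rw [hu_def] at h1
  simp only at h1
  have h3 : u x₀ = V x₀ + ε * (x₀ 2 * x₀ 2) := rfl
  rw [h3] at hub
  linarith


end SlabAux

open SlabAux

/-- Uniqueness for the div-curl system on `𝕋² × [0,L]`: a `C²` vector field that is
curl-free and divergence-free in the slab, `2π`-periodic in the first two variables,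
with vanishing third component on the top and bottom boundaries and vanishing fluxes
through the cross-sections `{x = 0}` and `{y = 0}`, is identically zero on the slab. -/
theorem stmt_11 (L : ℝ) (hL : 0 < L) (W : (Fin 3 → ℝ) → (Fin 3 → ℝ))
    (hW : ContDiff ℝ 2 W)
    (hper0 : ∀ x : Fin 3 → ℝ, W (x + Pi.single 0 (2 * π)) = W x)
    (hper1 : ∀ x : Fin 3 → ℝ, W (x + Pi.single 1 (2 * π)) = W x)
    (hcurl : ∀ x : Fin 3 → ℝ, x 2 ∈ Set.Icc 0 L →
      pd3 1 (fun y => W y 2) x - pd3 2 (fun y => W y 1) x = 0 ∧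
      pd3 2 (fun y => W y 0) x - pd3 0 (fun y => W y 2) x = 0 ∧
      pd3 0 (fun y => W y 1) x - pd3 1 (fun y => W y 0) x = 0)
    (hdiv : ∀ x : Fin 3 → ℝ, x 2 ∈ Set.Icc 0 L →
      pd3 0 (fun y => W y 0) x + pd3 1 (fun y => W y 1) x + pd3 2 (fun y => W y 2) x = 0)
    (hbot : ∀ x : Fin 3 → ℝ, x 2 = 0 → W x 2 = 0)
    (htop : ∀ x : Fin 3 → ℝ, x 2 = L → W x 2 = 0)
    (hflux1 : (∫ z in (0:ℝ)..L, ∫ y in (0:ℝ)..(2 * π), W ![0, y, z] 0) = 0)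
    (hflux2 : (∫ z in (0:ℝ)..L, ∫ x in (0:ℝ)..(2 * π), W ![x, 0, z] 1) = 0) :
    ∀ x : Fin 3 → ℝ, x 2 ∈ Set.Icc 0 L → W x = 0 := by
  have hπ : (0:ℝ) < π := Real.pi_pos
  have hW0 : ContDiff ℝ 2 (fun y => W y 0) := (contDiff_pi.mp hW) 0
  have hW1 : ContDiff ℝ 2 (fun y => W y 1) := (contDiff_pi.mp hW) 1
  have hW2 : ContDiff ℝ 2 (fun y => W y 2) := (contDiff_pi.mp hW) 2
  have hW0d : Differentiable ℝ (fun y => W y 0) := hW0.differentiable two_ne_zero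
  have hW1d : Differentiable ℝ (fun y => W y 1) := hW1.differentiable two_ne_zero
  have hW2d : Differentiable ℝ (fun y => W y 2) := hW2.differentiable two_ne_zero
  have hUopen : IsOpen {y : Fin 3 → ℝ | y 2 ∈ Set.Ioo 0 L} :=
    isOpen_Ioo.preimage (continuous_apply 2)
  -- Laplacian of the third component vanishes at interior points
  have hlap2 : ∀ x : Fin 3 → ℝ, x 2 ∈ Set.Ioo 0 L →
      pd3 0 (pd3 0 (fun y => W y 2)) x + pd3 1 (pd3 1 (fun y => W y 2)) x
        + pd3 2 (pd3 2 (fun y => W y 2)) x = 0 := by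
    intro x hx
    have hUx : {y : Fin 3 → ℝ | y 2 ∈ Set.Ioo 0 L} ∈ nhds x := hUopen.mem_nhds hx
    have hdiv' : pd3 2 (fun z => W z 2) =ᶠ[nhds x]
        (fun y => -pd3 0 (fun z => W z 0) y - pd3 1 (fun z => W z 1) y) := by
      filter_upwards [hUx] with y hy
      have := hdiv y (Set.Ioo_subset_Icc_self hy)
      linarith
    have e1 : pd3 2 (pd3 2 (fun y => W y 2)) x
        = pd3 2 (fun y => -pd3 0 (fun z => W z 0) y - pd3 1 (fun z => W z 1) y) x := by
      show fderiv ℝ _ x _ = fderiv ℝ _ x _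
      rw [hdiv'.fderiv_eq]
    have e2 : pd3 2 (fun y => -pd3 0 (fun z => W z 0) y - pd3 1 (fun z => W z 1) y) x
        = -pd3 2 (pd3 0 (fun z => W z 0)) x - pd3 2 (pd3 1 (fun z => W z 1)) x := by
      show fderiv ℝ _ x _ = _
      rw [HasFDerivAt.fderiv (f := fun y => -pd3 0 (fun z => W z 0) y - pd3 1 (fun z => W z 1) y) (((pd3_differentiable hW0 0 x).hasFDerivAt.neg).sub
        ((pd3_differentiable hW1 1 x).hasFDerivAt))]
      simp
      rfl
    have hc0 : pd3 0 (pd3 2 (fun z => W z 0)) x = pd3 0 (pd3 0 (fun z => W z 2)) x := by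
      have hev : pd3 2 (fun z => W z 0) =ᶠ[nhds x] pd3 0 (fun z => W z 2) := by
        filter_upwards [hUx] with y hy
        have := (hcurl y (Set.Ioo_subset_Icc_self hy)).2.1
        linarith
      show fderiv ℝ _ x _ = fderiv ℝ _ x _
      rw [hev.fderiv_eq]
    have hc1 : pd3 1 (pd3 2 (fun z => W z 1)) x = pd3 1 (pd3 1 (fun z => W z 2)) x := by
      have hev : pd3 2 (fun z => W z 1) =ᶠ[nhds x] pd3 1 (fun z => W z 2) := by
        filter_upwards [hUx] with y hy
        have := (hcurl y (Set.Ioo_subset_Icc_self hy)).1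
        linarith
      show fderiv ℝ _ x _ = fderiv ℝ _ x _
      rw [hev.fderiv_eq]
    have hs0 := pdComm hW0 2 0 x
    have hs1 := pdComm hW1 2 1 x
    linarith [e1, e2, hc0, hc1, hs0, hs1]
  -- vanishing of the third component on the slab
  have hpd_neg : ∀ (f : (Fin 3 → ℝ) → ℝ) (i : Fin 3),
      pd3 i (fun y => -f y) = fun y => -(pd3 i f y) := by
    intro f i
    funext y
    show fderiv ℝ _ y _ = _
    rw [show (fun y => -f y) = -f from rfl, fderiv_neg]
    simp
    rfl
  have hW2zero : ∀ x : Fin 3 → ℝ, x 2 ∈ Set.Icc 0 L → W x 2 = 0 := by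
    have hle := slab_max L hL (fun y => W y 2) hW2
      (fun x => congrFun (hper0 x) 2) (fun x => congrFun (hper1 x) 2) hlap2
      (fun x hx => hx.elim (hbot x) (htop x))
    have hge := slab_max L hL (fun y => -(W y 2)) hW2.neg
      (fun x => by simpa using congrArg Neg.neg (congrFun (hper0 x) 2))
      (fun x => by simpa using congrArg Neg.neg (congrFun (hper1 x) 2))
      (by
        intro x hx
        have h0 : pd3 0 (pd3 0 (fun y => -(W y 2))) x = -(pd3 0 (pd3 0 (fun y => W y 2)) x) := by
          rw [hpd_neg (fun y => W y 2) 0, hpd_neg (pd3 0 (fun y => W y 2)) 0]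
        have h1 : pd3 1 (pd3 1 (fun y => -(W y 2))) x = -(pd3 1 (pd3 1 (fun y => W y 2)) x) := by
          rw [hpd_neg (fun y => W y 2) 1, hpd_neg (pd3 1 (fun y => W y 2)) 1]
        have h2 : pd3 2 (pd3 2 (fun y => -(W y 2))) x = -(pd3 2 (pd3 2 (fun y => W y 2)) x) := by
          rw [hpd_neg (fun y => W y 2) 2, hpd_neg (pd3 2 (fun y => W y 2)) 2]
        rw [h0, h1, h2]
        have := hlap2 x hx
        linarith)
      (fun x hx => by simp [hx.elim (hbot x) (htop x)])
    intro x hx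
    have h1 := hle x hx
    have h2 := hge x hx
    linarith
  -- horizontal derivatives of third component vanish on the slab
  have h20 : ∀ x : Fin 3 → ℝ, x 2 ∈ Set.Icc 0 L → pd3 0 (fun z => W z 2) x = 0 := by
    intro x hx
    apply pd3_eq_zero_of_const_on_line (hW2d x)
    intro s
    have h1 : (Function.update x 0 s) 2 = x 2 := Function.update_of_ne (by decide) s x
    rw [hW2zero _ (by rw [h1]; exact hx), hW2zero x hx]
  have h21 : ∀ x : Fin 3 → ℝ, x 2 ∈ Set.Icc 0 L → pd3 1 (fun z => W z 2) x = 0 := by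
    intro x hx
    apply pd3_eq_zero_of_const_on_line (hW2d x)
    intro s
    have h1 : (Function.update x 1 s) 2 = x 2 := Function.update_of_ne (by decide) s x
    rw [hW2zero _ (by rw [h1]; exact hx), hW2zero x hx]
  have h22 : ∀ x : Fin 3 → ℝ, x 2 ∈ Set.Ioo 0 L → pd3 2 (fun z => W z 2) x = 0 := by
    intro x hx
    have hev : (fun z => W z 2) =ᶠ[nhds x] (fun _ => (0:ℝ)) := by
      filter_upwards [hUopen.mem_nhds hx] with y hy
      exact hW2zero y (Set.Ioo_subset_Icc_self hy)
    show fderiv ℝ _ x _ = 0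
    rw [hev.fderiv_eq]
    simp
  -- vertical derivatives of horizontal components vanish on the slab
  have hv0 : ∀ x : Fin 3 → ℝ, x 2 ∈ Set.Icc 0 L → pd3 2 (fun z => W z 0) x = 0 := by
    intro x hx
    have h1 := (hcurl x hx).2.1
    have h2 := h20 x hx
    linarith
  have hv1 : ∀ x : Fin 3 → ℝ, x 2 ∈ Set.Icc 0 L → pd3 2 (fun z => W z 1) x = 0 := by
    intro x hx
    have h1 := (hcurl x hx).1
    have h2 := h21 x hx
    linarith
  -- vertical constancy of horizontal components
  have hvert : ∀ (j : Fin 3), (∀ x : Fin 3 → ℝ, x 2 ∈ Set.Icc 0 L → pd3 2 (fun z => W z j) x = 0) →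
      ∀ (x : Fin 3 → ℝ), ∀ s ∈ Set.Icc (0:ℝ) L, ∀ t ∈ Set.Icc (0:ℝ) L,
        W (Function.update x 2 s) j = W (Function.update x 2 t) j := by
    intro j hj x
    have hWjd : Differentiable ℝ (fun z => W z j) := ((contDiff_pi.mp hW) j).differentiable two_ne_zero
    have hupc : Continuous (fun s : ℝ => Function.update x 2 s) := by
      have : (fun s : ℝ => Function.update x 2 s)
          = fun s : ℝ => x + (s - x 2) • (Pi.single 2 1 : Fin 3 → ℝ) := by
        funext s; exact update_eq_affine x 2 s
      rw [this]
      exact continuous_const.add ((continuous_id.sub continuous_const).smul continuous_const)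
    have hcont : ContinuousOn (fun s : ℝ => W (Function.update x 2 s) j) (Set.Icc 0 L) :=
      (((continuous_apply j).comp hW.continuous).comp hupc).continuousOn
    have hderiv : ∀ s ∈ Set.Ico (0:ℝ) L,
        HasDerivWithinAt (fun s : ℝ => W (Function.update x 2 s) j) 0 (Set.Ici s) s := by
      intro s hs
      have h := hasDerivAt_line (f := fun z => W z j) (x := x) (i := 2) (t := s) (hWjd _)
      have hz : (Function.update x 2 s) 2 = s := Function.update_self 2 s x
      rw [hj _ (by rw [hz]; exact Set.Ico_subset_Icc_self hs)] at h
      exact h.hasDerivWithinAt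
    have hconst := constant_of_has_deriv_right_zero hcont hderiv
    intro s hs t ht
    rw [hconst s hs, hconst t ht]
  -- horizontal harmonicity of the first component at interior points
  have hharm0 : ∀ x : Fin 3 → ℝ, x 2 ∈ Set.Ioo 0 L →
      pd3 0 (pd3 0 (fun z => W z 0)) x + pd3 1 (pd3 1 (fun z => W z 0)) x = 0 := by
    intro x hx
    have hUx : {y : Fin 3 → ℝ | y 2 ∈ Set.Ioo 0 L} ∈ nhds x := hUopen.mem_nhds hx
    have hev1 : pd3 0 (fun z => W z 0) =ᶠ[nhds x] (fun y => -pd3 1 (fun z => W z 1) y) := by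
      filter_upwards [hUx] with y hy
      have hd := hdiv y (Set.Ioo_subset_Icc_self hy)
      have h2 := h22 y hy
      linarith
    have e1 : pd3 0 (pd3 0 (fun z => W z 0)) x = pd3 0 (fun y => -pd3 1 (fun z => W z 1) y) x := by
      show fderiv ℝ _ x _ = fderiv ℝ _ x _
      rw [hev1.fderiv_eq]
    have e2 : pd3 0 (fun y => -pd3 1 (fun z => W z 1) y) x = -pd3 0 (pd3 1 (fun z => W z 1)) x := by
      show fderiv ℝ _ x _ = _
      rw [HasFDerivAt.fderiv (f := fun y => -pd3 1 (fun z => W z 1) y) ((pd3_differentiable hW1 1 x).hasFDerivAt.neg)]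
      simp
      rfl
    have hev2 : pd3 1 (fun z => W z 0) =ᶠ[nhds x] pd3 0 (fun z => W z 1) := by
      filter_upwards [hUx] with y hy
      have := (hcurl y (Set.Ioo_subset_Icc_self hy)).2.2
      linarith
    have e3 : pd3 1 (pd3 1 (fun z => W z 0)) x = pd3 1 (pd3 0 (fun z => W z 1)) x := by
      show fderiv ℝ _ x _ = fderiv ℝ _ x _
      rw [hev2.fderiv_eq]
    have e4 := pdComm hW1 1 0 x
    linarith [e1, e2, e3, e4]
  -- the plane z = L/2 and the holomorphic function built from the gradient of W₀
  have hhalf : L/2 ∈ Set.Ioo (0:ℝ) L := ⟨by linarith, by linarith⟩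
  have hhalfIcc : L/2 ∈ Set.Icc (0:ℝ) L := Set.Ioo_subset_Icc_self hhalf
  set A : ℂ →L[ℝ] (Fin 3 → ℝ) :=
    Complex.reCLM.smulRight (Pi.single 0 1 : Fin 3 → ℝ)
      + Complex.imCLM.smulRight (Pi.single 1 1 : Fin 3 → ℝ) with hA_def
  set k : Fin 3 → ℝ := Function.update (0 : Fin 3 → ℝ) 2 (L/2) with hk_def
  set φ : ℂ → (Fin 3 → ℝ) := fun ζ => A ζ + k with hφ_def
  have hAapp : ∀ (ζ : ℂ) (j : Fin 3), A ζ j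
      = ζ.re * (Pi.single 0 1 : Fin 3 → ℝ) j + ζ.im * (Pi.single 1 1 : Fin 3 → ℝ) j := by
    intro ζ j
    simp [hA_def]
  have hφ0 : ∀ ζ : ℂ, φ ζ 0 = ζ.re := by
    intro ζ
    simp [hφ_def, hk_def, hAapp, Function.update_apply]
  have hφ1 : ∀ ζ : ℂ, φ ζ 1 = ζ.im := by
    intro ζ
    simp [hφ_def, hk_def, hAapp, Function.update_apply, Pi.single_apply]
  have hφ2 : ∀ ζ : ℂ, φ ζ 2 = L/2 := by
    intro ζ
    simp [hφ_def, hk_def, hAapp, Function.update_apply, Pi.single_apply]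
  have hA1 : A 1 = (Pi.single 0 1 : Fin 3 → ℝ) := by
    funext j
    rw [hAapp]
    simp
  have hAI : A Complex.I = (Pi.single 1 1 : Fin 3 → ℝ) := by
    funext j
    rw [hAapp]
    simp
  have hφd : ∀ ζ : ℂ, HasFDerivAt φ A ζ := fun ζ => A.hasFDerivAt.add_const k
  set HH : (Fin 3 → ℝ) → ℂ := fun y => (↑(pd3 0 (fun z => W z 0) y) : ℂ)
      - Complex.I * (↑(pd3 1 (fun z => W z 0) y) : ℂ) with hH_def
  set G : ℂ → ℂ := fun ζ => HH (φ ζ) with hG_def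
  have hGdiff : Differentiable ℂ G := by
    intro ζ
    have hD0 : HasFDerivAt (fun ζ : ℂ => pd3 0 (fun z => W z 0) (φ ζ))
        ((fderiv ℝ (pd3 0 (fun z => W z 0)) (φ ζ)).comp A) ζ :=
      ((pd3_differentiable hW0 0 (φ ζ)).hasFDerivAt).comp ζ (hφd ζ)
    have hD1 : HasFDerivAt (fun ζ : ℂ => pd3 1 (fun z => W z 0) (φ ζ))
        ((fderiv ℝ (pd3 1 (fun z => W z 0)) (φ ζ)).comp A) ζ :=
      ((pd3_differentiable hW0 1 (φ ζ)).hasFDerivAt).comp ζ (hφd ζ)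
    have hre0 := Complex.ofRealCLM.hasFDerivAt.comp ζ hD0
    have hre1 := Complex.ofRealCLM.hasFDerivAt.comp ζ hD1
    have hmul := hre1.const_mul Complex.I
    have hG1 := hre0.sub hmul
    have hG2 : HasFDerivAt G
        (Complex.ofRealCLM.comp ((fderiv ℝ (pd3 0 (fun z => W z 0)) (φ ζ)).comp A)
          - Complex.I • (Complex.ofRealCLM.comp ((fderiv ℝ (pd3 1 (fun z => W z 0)) (φ ζ)).comp A))) ζ := hG1
    refine (hasDerivAt_of_CR hG2 rfl ?_).differentiableAt
    simp only [ContinuousLinearMap.sub_apply, ContinuousLinearMap.smul_apply,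
      ContinuousLinearMap.comp_apply, Complex.ofRealCLM_apply, smul_eq_mul, hA1, hAI]
    have r1 : (fderiv ℝ (pd3 0 (fun z => W z 0)) (φ ζ)) (Pi.single 1 1)
        = pd3 1 (pd3 0 (fun z => W z 0)) (φ ζ) := rfl
    have r2 : (fderiv ℝ (pd3 1 (fun z => W z 0)) (φ ζ)) (Pi.single 1 1)
        = pd3 1 (pd3 1 (fun z => W z 0)) (φ ζ) := rfl
    have r3 : (fderiv ℝ (pd3 0 (fun z => W z 0)) (φ ζ)) (Pi.single 0 1)
        = pd3 0 (pd3 0 (fun z => W z 0)) (φ ζ) := rfl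
    have r4 : (fderiv ℝ (pd3 1 (fun z => W z 0)) (φ ζ)) (Pi.single 0 1)
        = pd3 0 (pd3 1 (fun z => W z 0)) (φ ζ) := rfl
    rw [r1, r2, r3, r4]
    have hsym := pdComm hW0 1 0 (φ ζ)
    have hh := hharm0 (φ ζ) (by rw [hφ2]; exact hhalf)
    rw [hsym, show pd3 1 (pd3 1 (fun z => W z 0)) (φ ζ)
      = -(pd3 0 (pd3 0 (fun z => W z 0)) (φ ζ)) from by linarith]
    push_cast
    ring_nf
    rw [Complex.I_sq]
    ring
  have hHper0 : ∀ y, HH (y + (Pi.single 0 (2*π) : Fin 3 → ℝ)) = HH y := by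
    intro y
    simp only [hH_def]
    rw [pd3_translate hW0d (fun x => congrFun (hper0 x) 0) 0 y,
        pd3_translate hW0d (fun x => congrFun (hper0 x) 0) 1 y]
  have hHper1 : ∀ y, HH (y + (Pi.single 1 (2*π) : Fin 3 → ℝ)) = HH y := by
    intro y
    simp only [hH_def]
    rw [pd3_translate hW0d (fun x => congrFun (hper1 x) 0) 0 y,
        pd3_translate hW0d (fun x => congrFun (hper1 x) 0) 1 y]
  have hGc : Continuous G := by
    have hφc : Continuous φ := A.continuous.add continuous_const
    have c0 : Continuous (pd3 0 (fun z => W z 0)) := (pd3_differentiable hW0 0).continuous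
    have c1 : Continuous (pd3 1 (fun z => W z 0)) := (pd3_differentiable hW0 1).continuous
    exact ((Complex.continuous_ofReal.comp (c0.comp hφc)).sub
      (continuous_const.mul (Complex.continuous_ofReal.comp (c1.comp hφc))))
  have hbdd : Bornology.IsBounded (Set.range G) := by
    set Kc : Set ℂ := (fun pr : ℝ × ℝ => ((pr.1 : ℂ) + (pr.2 : ℂ) * Complex.I)) ''
      (Set.Icc 0 (2*π) ×ˢ Set.Icc 0 (2*π)) with hKc_def
    have hKcc : IsCompact Kc := (isCompact_Icc.prod isCompact_Icc).image
      ((Complex.continuous_ofReal.comp continuous_fst).add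
        ((Complex.continuous_ofReal.comp continuous_snd).mul continuous_const))
    have hsub : Set.range G ⊆ G '' Kc := by
      rintro w ⟨ζ, rfl⟩
      obtain ⟨x', hHx', hx'2, hx'0, hx'1⟩ := reduce (per_int hHper0) (per_int hHper1) (φ ζ)
      have hφζ' : φ ((↑(x' 0) : ℂ) + (↑(x' 1) : ℂ) * Complex.I) = x' := by
        funext j
        fin_cases j
        · show φ _ 0 = x' 0
          rw [hφ0]; simp
        · show φ _ 1 = x' 1
          rw [hφ1]; simp
        · show φ _ 2 = x' 2
          rw [hφ2, hx'2, hφ2]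
      refine ⟨(↑(x' 0) : ℂ) + (↑(x' 1) : ℂ) * Complex.I, ⟨(x' 0, x' 1), ⟨hx'0, hx'1⟩, rfl⟩, ?_⟩
      show HH (φ _) = HH (φ ζ)
      rw [hφζ', hHx']
    exact ((hKcc.image hGc).isBounded).subset hsub
  have hGconst : ∀ ζ, G ζ = G 0 := fun ζ => hGdiff.apply_eq_apply_of_bounded hbdd ζ 0
  set p₀ : Fin 3 → ℝ := φ 0 with hp₀
  have hp₀2 : p₀ 2 = L/2 := hφ2 0
  have hpc0 : ∀ p : Fin 3 → ℝ, p 2 = L/2 →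
      pd3 0 (fun z => W z 0) p = pd3 0 (fun z => W z 0) p₀ ∧
      pd3 1 (fun z => W z 0) p = pd3 1 (fun z => W z 0) p₀ := by
    intro p hp
    have hφp : φ ((↑(p 0) : ℂ) + (↑(p 1) : ℂ) * Complex.I) = p := by
      funext j
      fin_cases j
      · show φ _ 0 = p 0
        rw [hφ0]; simp
      · show φ _ 1 = p 1
        rw [hφ1]; simp
      · show φ _ 2 = p 2
        rw [hφ2, hp]
    have h := hGconst ((↑(p 0) : ℂ) + (↑(p 1) : ℂ) * Complex.I)
    show _ ∧ _
    have h' : HH p = HH p₀ := by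
      rw [← hφp]
      exact h
    have hre := congrArg Complex.re h'
    have him := congrArg Complex.im h'
    simp only [hH_def, Complex.sub_re, Complex.sub_im, Complex.ofReal_re, Complex.ofReal_im,
      Complex.mul_re, Complex.mul_im, Complex.I_re, Complex.I_im] at hre him
    constructor
    · linarith [hre]
    · linarith [him]
  -- the constant values of the plane gradient vanish by periodicity
  have hca : pd3 0 (fun z => W z 0) p₀ = 0 := by
    have hg : ∀ t : ℝ, HasDerivAt (fun s => W (Function.update p₀ 0 s) 0)
        (pd3 0 (fun z => W z 0) p₀) t := by
      intro t
      have h := hasDerivAt_line (f := fun z => W z 0) (x := p₀) (i := 0) (t := t) (hW0d _)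
      have h2 : (Function.update p₀ 0 t) 2 = L/2 := by
        rw [Function.update_of_ne (by decide)]; exact hp₀2
      rwa [(hpc0 _ h2).1] at h
    have hper : ∀ t : ℝ, W (Function.update p₀ 0 (t + 2*π)) 0 = W (Function.update p₀ 0 t) 0 := by
      intro t
      have hupd : Function.update p₀ 0 (t + 2*π)
          = Function.update p₀ 0 t + (Pi.single 0 (2*π) : Fin 3 → ℝ) := by
        funext j
        rcases eq_or_ne j 0 with h | h
        · subst h; simp
        · simp [Function.update_of_ne h, Pi.single_eq_of_ne h]
      rw [hupd]
      exact congrFun (hper0 _) 0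
    exact (constOfDerivConstPeriodic (by positivity) hg hper).1
  have hcb : pd3 1 (fun z => W z 0) p₀ = 0 := by
    have hg : ∀ t : ℝ, HasDerivAt (fun s => W (Function.update p₀ 1 s) 0)
        (pd3 1 (fun z => W z 0) p₀) t := by
      intro t
      have h := hasDerivAt_line (f := fun z => W z 0) (x := p₀) (i := 1) (t := t) (hW0d _)
      have h2 : (Function.update p₀ 1 t) 2 = L/2 := by
        rw [Function.update_of_ne (by decide)]; exact hp₀2
      rwa [(hpc0 _ h2).2] at h
    have hper : ∀ t : ℝ, W (Function.update p₀ 1 (t + 2*π)) 0 = W (Function.update p₀ 1 t) 0 := by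
      intro t
      have hupd : Function.update p₀ 1 (t + 2*π)
          = Function.update p₀ 1 t + (Pi.single 1 (2*π) : Fin 3 → ℝ) := by
        funext j
        rcases eq_or_ne j 1 with h | h
        · subst h; simp
        · simp [Function.update_of_ne h, Pi.single_eq_of_ne h]
      rw [hupd]
      exact congrFun (hper1 _) 0
    exact (constOfDerivConstPeriodic (by positivity) hg hper).1
  have hpa : ∀ p : Fin 3 → ℝ, p 2 = L/2 →
      pd3 0 (fun z => W z 0) p = 0 ∧ pd3 1 (fun z => W z 0) p = 0 :=
    fun p hp => ⟨(hpc0 p hp).1.trans hca, (hpc0 p hp).2.trans hcb⟩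
  have hpb : ∀ p : Fin 3 → ℝ, p 2 = L/2 →
      pd3 0 (fun z => W z 1) p = 0 ∧ pd3 1 (fun z => W z 1) p = 0 := by
    intro p hp
    have hpIcc : p 2 ∈ Set.Icc 0 L := by rw [hp]; exact hhalfIcc
    have h1 := (hcurl p hpIcc).2.2
    have h2 := hdiv p hpIcc
    have h3 := h22 p (by rw [hp]; exact hhalf)
    have h4 := (hpa p hp).1
    have h5 := (hpa p hp).2
    constructor
    · linarith
    · linarith
  -- constancy on the plane
  have hplane : ∀ (j : Fin 3), (∀ p : Fin 3 → ℝ, p 2 = L/2 →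
        pd3 0 (fun z => W z j) p = 0 ∧ pd3 1 (fun z => W z j) p = 0) →
      ∀ p : Fin 3 → ℝ, p 2 = L/2 → W p j = W p₀ j := by
    intro j hzero p hp
    have hWjd : Differentiable ℝ (fun z => W z j) :=
      ((contDiff_pi.mp hW) j).differentiable two_ne_zero
    have hline : ∀ (i : Fin 3), i = 0 ∨ i = 1 → ∀ (q : Fin 3 → ℝ), q 2 = L/2 → ∀ s,
        W (Function.update q i s) j = W q j := by
      intro i hi q hq s
      have hg : ∀ t : ℝ, HasDerivAt (fun s => W (Function.update q i s) j) 0 t := by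
        intro t
        have h := hasDerivAt_line (f := fun z => W z j) (x := q) (i := i) (t := t) (hWjd _)
        have h2 : (Function.update q i t) 2 = L/2 := by
          rw [Function.update_of_ne (by rcases hi with h|h <;> subst h <;> decide)]; exact hq
        rcases hi with h|h <;> subst h
        · rwa [(hzero _ h2).1] at h
        · rwa [(hzero _ h2).2] at h
      have hcst := is_const_of_deriv_eq_zero (fun t => (hg t).differentiableAt)
        (fun t => (hg t).deriv) s (q i)
      rwa [Function.update_eq_self] at hcst
    have hq1 : (Function.update p 1 (p₀ 1)) 2 = L/2 := by
      rw [Function.update_of_ne (by decide)]; exact hp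
    have e1 : W (Function.update p 1 (p₀ 1)) j = W p j := hline 1 (Or.inr rfl) p hp (p₀ 1)
    have e2 : W (Function.update (Function.update p 1 (p₀ 1)) 0 (p₀ 0)) j
        = W (Function.update p 1 (p₀ 1)) j := hline 0 (Or.inl rfl) _ hq1 (p₀ 0)
    have e3 : Function.update (Function.update p 1 (p₀ 1)) 0 (p₀ 0) = p₀ := by
      funext m
      fin_cases m
      · show Function.update (Function.update p 1 (p₀ 1)) 0 (p₀ 0) 0 = p₀ 0
        simp
      · show Function.update (Function.update p 1 (p₀ 1)) 0 (p₀ 0) 1 = p₀ 1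
        rw [Function.update_of_ne (by decide)]
        simp
      · show Function.update (Function.update p 1 (p₀ 1)) 0 (p₀ 0) 2 = p₀ 2
        rw [Function.update_of_ne (by decide), Function.update_of_ne (by decide), hp, hp₀2]
    rw [← e1, ← e2, e3]
  -- constancy on the slab
  have hslab : ∀ (j : Fin 3),
      (∀ x : Fin 3 → ℝ, x 2 ∈ Set.Icc 0 L → pd3 2 (fun z => W z j) x = 0) →
      (∀ p : Fin 3 → ℝ, p 2 = L/2 → W p j = W p₀ j) →
      ∀ x : Fin 3 → ℝ, x 2 ∈ Set.Icc 0 L → W x j = W p₀ j := by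
    intro j hj hplanej x hx
    have h1 := hvert j hj x (x 2) hx (L/2) ⟨by linarith, by linarith⟩
    rw [Function.update_eq_self] at h1
    rw [h1]
    exact hplanej _ (Function.update_self 2 (L/2) x)
  have hslab0 := hslab 0 hv0 (hplane 0 hpa)
  have hslab1 := hslab 1 hv1 (hplane 1 hpb)
  -- fluxes kill the constants
  have hπne : (π : ℝ) ≠ 0 := ne_of_gt hπ
  have hLne : L ≠ 0 := ne_of_gt hL
  have hc0 : W p₀ 0 = 0 := by
    have hinner : Set.EqOn (fun z : ℝ => ∫ y in (0:ℝ)..(2*π), W ![0, y, z] 0)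
        (fun _ => 2*π*(W p₀ 0)) (Set.uIcc 0 L) := by
      intro z hz
      rw [Set.uIcc_of_le hL.le] at hz
      have heq : Set.EqOn (fun y : ℝ => W ![0,y,z] 0) (fun _ => W p₀ 0) (Set.uIcc 0 (2*π)) := by
        intro y _
        have hmem : (![0,y,z] : Fin 3 → ℝ) 2 ∈ Set.Icc 0 L := hz
        exact hslab0 ![0,y,z] hmem
      show (∫ y in (0:ℝ)..(2*π), W ![0, y, z] 0) = 2*π*(W p₀ 0)
      rw [intervalIntegral.integral_congr heq, intervalIntegral.integral_const, sub_zero,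
        smul_eq_mul]
    rw [intervalIntegral.integral_congr hinner, intervalIntegral.integral_const, sub_zero,
      smul_eq_mul] at hflux1
    rcases mul_eq_zero.mp hflux1 with h | h
    · exact absurd h hLne
    · rcases mul_eq_zero.mp h with h' | h'
      · rcases mul_eq_zero.mp h' with h'' | h''
        · norm_num at h''
        · exact absurd h'' hπne
      · exact h'
  have hc1 : W p₀ 1 = 0 := by
    have hinner : Set.EqOn (fun z : ℝ => ∫ x in (0:ℝ)..(2*π), W ![x, 0, z] 1)
        (fun _ => 2*π*(W p₀ 1)) (Set.uIcc 0 L) := by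
      intro z hz
      rw [Set.uIcc_of_le hL.le] at hz
      have heq : Set.EqOn (fun x : ℝ => W ![x,0,z] 1) (fun _ => W p₀ 1) (Set.uIcc 0 (2*π)) := by
        intro x _
        have hmem : (![x,0,z] : Fin 3 → ℝ) 2 ∈ Set.Icc 0 L := hz
        exact hslab1 ![x,0,z] hmem
      show (∫ x in (0:ℝ)..(2*π), W ![x, 0, z] 1) = 2*π*(W p₀ 1)
      rw [intervalIntegral.integral_congr heq, intervalIntegral.integral_const, sub_zero,
        smul_eq_mul]
    rw [intervalIntegral.integral_congr hinner, intervalIntegral.integral_const, sub_zero,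
      smul_eq_mul] at hflux2
    rcases mul_eq_zero.mp hflux2 with h | h
    · exact absurd h hLne
    · rcases mul_eq_zero.mp h with h' | h'
      · rcases mul_eq_zero.mp h' with h'' | h''
        · norm_num at h''
        · exact absurd h'' hπne
      · exact h'
  -- conclusion
  intro x hx
  have h0 := hslab0 x hx
  have h1 := hslab1 x hx
  have h2 := hW2zero x hx
  funext i
  fin_cases i
  · show W x 0 = 0
    rw [h0, hc0]
  · show W x 1 = 0
    rw [h1, hc1]
  · show W x 2 = 0
    exact h2
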